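/- Let p and p̃ be probability density functions of univariate real random variables, let F̃ denote the cumulative distribution function of p̃, and for K ∈ ℕ and n ∈ {0,…,K} let Q_K(n) = ∫_ℝ C(K,n) · F̃(y)^n · (1 − F̃(y))^{K−n} · p(y) dy. If ‖p − p̃‖_{L¹(ℝ)} ≤ ε, then 1/(K+1) − ε ≤ Q_K(n) ≤ 1/(K+1) + ε for every n ∈ {0,…,K}. -/

import Mathlib

open MeasureTheory

open Set Filter Topology intervalIntegral ENNReal

lemma parts_step (n m : ℕ) :
    ∫ x in (0:ℝ)..1, x ^ n * (1 - x) ^ (m + 1)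
      = ((m + 1 : ℝ) / (n + 1)) * ∫ x in (0:ℝ)..1, x ^ (n + 1) * (1 - x) ^ m := by
  have hu : ∀ x ∈ Set.uIcc (0:ℝ) 1, HasDerivAt (fun x : ℝ => (1 - x) ^ (m + 1))
      (-(((m:ℝ) + 1) * (1 - x) ^ m)) x := by
    intro x _
    have h := (((hasDerivAt_id x).const_sub 1).pow (m + 1))
    refine h.congr_deriv ?_
    simp only [id_eq]
    push_cast
    ring
  have hv : ∀ x ∈ Set.uIcc (0:ℝ) 1, HasDerivAt (fun x : ℝ => x ^ (n + 1) / ((n:ℝ) + 1))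
      (x ^ n) x := by
    intro x _
    have h := (hasDerivAt_pow (n + 1) x).div_const ((n:ℝ) + 1)
    refine h.congr_deriv ?_
    have : ((n:ℝ) + 1) ≠ 0 := by positivity
    field_simp
    push_cast
    ring
  have key := intervalIntegral.integral_mul_deriv_eq_deriv_mul hu hv
    (by apply Continuous.intervalIntegrable; continuity)
    (by apply Continuous.intervalIntegrable; continuity)
  have e1 : (∫ x in (0:ℝ)..1, x ^ n * (1 - x) ^ (m + 1))
      = ∫ x in (0:ℝ)..1, (1 - x) ^ (m + 1) * x ^ n := by
    congr 1; funext x; ring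
  rw [e1, key]
  have e2 : (∫ x in (0:ℝ)..1, -(((m:ℝ) + 1) * (1 - x) ^ m) * (x ^ (n + 1) / ((n:ℝ) + 1)))
      = (-(((m:ℝ) + 1) / ((n:ℝ) + 1))) * ∫ x in (0:ℝ)..1, x ^ (n + 1) * (1 - x) ^ m := by
    rw [← intervalIntegral.integral_const_mul]
    congr 1; funext x; ring
  rw [e2]
  simp

lemma beta_aux (m : ℕ) : ∀ n : ℕ,
    (((n:ℝ) + m + 1) * ((n + m).choose m)) * ∫ x in (0:ℝ)..1, x ^ n * (1 - x) ^ m = 1 := by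
  induction m with
  | zero =>
    intro n
    simp [integral_pow]
    have : ((n:ℝ) + 1) ≠ 0 := by positivity
    field_simp
  | succ m ih =>
    intro n
    rw [parts_step]
    have h2 := ih (n + 1)
    rw [show n + 1 + m = n + m + 1 from by omega] at h2
    have hC : (((n + m + 1).choose (m + 1) : ℝ)) * ((m:ℝ) + 1)
        = (((n + m + 1).choose m : ℝ)) * ((n:ℝ) + 1) := by
      have := Nat.choose_succ_right_eq (n + m + 1) m
      rw [show n + m + 1 - m = n + 1 from by omega] at this
      exact_mod_cast congrArg (Nat.cast : ℕ → ℝ) this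
    set J := ∫ x in (0:ℝ)..1, x ^ (n + 1) * (1 - x) ^ m with hJ
    rw [show n + (m + 1) = n + m + 1 from by omega]
    push_cast at h2 ⊢
    have hne : ((n:ℝ) + 1) ≠ 0 := by positivity
    field_simp
    linear_combination ((n:ℝ) + (m:ℝ) + 2) * J * hC + ((n:ℝ) + 1) * h2

lemma bernstein_integral {K n : ℕ} (hn : n ≤ K) :
    ∫ x in (0:ℝ)..1, (K.choose n : ℝ) * x ^ n * (1 - x) ^ (K - n) = 1 / ((K:ℝ) + 1) := by
  have h := beta_aux (K - n) n
  rw [show n + (K - n) = K from by omega] at h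
  rw [Nat.choose_symm hn] at h
  have hcast : ((n:ℝ) + (K - n : ℕ) + 1) = (K:ℝ) + 1 := by
    push_cast [Nat.cast_sub hn]
    ring
  rw [hcast] at h
  have e : (∫ x in (0:ℝ)..1, (K.choose n : ℝ) * x ^ n * (1 - x) ^ (K - n))
      = (K.choose n : ℝ) * ∫ x in (0:ℝ)..1, x ^ n * (1 - x) ^ (K - n) := by
    rw [← intervalIntegral.integral_const_mul]
    congr 1; funext x; ring
  rw [e]
  have hpos : (0:ℝ) < (K.choose n : ℝ) := by exact_mod_cast Nat.choose_pos hn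
  have hK : (0:ℝ) < (K:ℝ) + 1 := by positivity
  field_simp at h ⊢
  linear_combination h


/-- **Theorem 2 (continuity of the rank statistic w.r.t. the L¹ norm).**
If `p` and `p̃` are probability densities on `ℝ`, `F̃` is the cdf of `p̃`, and
`Q_K(n) = ∫ C(K,n) F̃(y)^n (1 - F̃(y))^{K-n} p(y) dy`, then `‖p - p̃‖_{L¹} ≤ ε`
implies `1/(K+1) - ε ≤ Q_K(n) ≤ 1/(K+1) + ε` for every `n ∈ {0,…,K}`. -/
theorem rank_statistic_near_uniform_of_L1_close
    (p ptilde : ℝ → ℝ) (Ftilde : ℝ → ℝ) (ε : ℝ)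
    (hp_nonneg : ∀ x, 0 ≤ p x) (hp_int : Integrable p)
    (hp_one : ∫ x, p x = 1)
    (hpt_nonneg : ∀ x, 0 ≤ ptilde x) (hpt_int : Integrable ptilde)
    (hpt_one : ∫ x, ptilde x = 1)
    (hF : ∀ y, Ftilde y = ∫ x in Set.Iic y, ptilde x)
    (hL1 : (∫ x, |p x - ptilde x|) ≤ ε)
    (K n : ℕ) (hn : n ≤ K) :
    1 / (K + 1) - ε
        ≤ (∫ y, (K.choose n : ℝ) * Ftilde y ^ n * (1 - Ftilde y) ^ (K - n) * p y)
      ∧ (∫ y, (K.choose n : ℝ) * Ftilde y ^ n * (1 - Ftilde y) ^ (K - n) * p y)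
        ≤ 1 / (K + 1) + ε := by
  have hpt_ae : 0 ≤ᵐ[volume] ptilde := Filter.Eventually.of_forall hpt_nonneg
  have hF0 : ∀ y, 0 ≤ Ftilde y := fun y => by
    rw [hF]; exact integral_nonneg fun x => hpt_nonneg x
  have hF1 : ∀ y, Ftilde y ≤ 1 := fun y => by
    rw [hF, ← hpt_one]
    exact setIntegral_le_integral hpt_int hpt_ae
  have hFmono : Monotone Ftilde := fun a b hab => by
    rw [hF, hF]
    exact setIntegral_mono_set hpt_int.integrableOn (ae_restrict_of_ae hpt_ae)
      (HasSubset.Subset.eventuallyLE (Iic_subset_Iic.2 hab))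
  have hFcont : Continuous Ftilde := by
    have hrepr : Ftilde = fun y => Ftilde 0 + ∫ x in (0:ℝ)..y, ptilde x := by
      funext y
      have h := integral_Iic_sub_Iic (f := ptilde) (μ := volume) (a := 0) (b := y)
        hpt_int.integrableOn hpt_int.integrableOn
      rw [hF y, hF 0] at *
      linarith
    rw [hrepr]
    exact continuous_const.add
      (intervalIntegral.continuous_primitive (fun a b => hpt_int.intervalIntegrable) 0)
  set μ : Measure ℝ := volume.withDensity fun x => ENNReal.ofReal (ptilde x) with hμ
  have hμIic : ∀ y, μ (Iic y) = ENNReal.ofReal (Ftilde y) := by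
    intro y
    rw [hμ, withDensity_apply _ measurableSet_Iic, hF]
    exact (ofReal_integral_eq_lintegral_ofReal hpt_int.integrableOn (ae_restrict_of_ae hpt_ae)).symm
  have hμuniv : μ univ = 1 := by
    rw [hμ, withDensity_apply _ MeasurableSet.univ, Measure.restrict_univ,
      ← ofReal_integral_eq_lintegral_ofReal hpt_int hpt_ae, hpt_one, ENNReal.ofReal_one]
  haveI : IsProbabilityMeasure μ := ⟨hμuniv⟩
  have hFtop : Tendsto Ftilde atTop (𝓝 1) := by
    have h1 := tendsto_measure_Iic_atTop μ
    rw [hμuniv] at h1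
    have h2 := (ENNReal.tendsto_toReal (by simp : (1:ℝ≥0∞) ≠ ⊤)).comp h1
    simp only [ENNReal.toReal_one] at h2
    have heq : Ftilde = fun y => (μ (Iic y)).toReal := by
      funext y
      rw [hμIic y, ENNReal.toReal_ofReal (hF0 y)]
    rw [heq]
    exact h2
  have hFbot : ∀ t : ℝ, 0 < t → ∃ y, Ftilde y < t := by
    intro t ht
    by_contra hcon
    push_neg at hcon
    have hA : Antitone fun k : ℕ => Iic (-(k:ℝ)) := fun a b hab =>
      Iic_subset_Iic.2 (neg_le_neg (by exact_mod_cast hab))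
    have hI : ⋂ k : ℕ, Iic (-(k:ℝ)) = (∅ : Set ℝ) := by
      ext x
      simp only [mem_iInter, mem_Iic, mem_empty_iff_false, iff_false, not_forall, not_le]
      obtain ⟨k, hk⟩ := exists_nat_gt (-x)
      exact ⟨k, by linarith⟩
    have h3 := tendsto_measure_iInter_atTop (μ := μ)
      (fun k => (measurableSet_Iic).nullMeasurableSet) hA ⟨0, by finiteness⟩
    rw [hI] at h3
    simp only [measure_empty] at h3
    have h4 : ∀ k : ℕ, ENNReal.ofReal t ≤ μ (Iic (-(k:ℝ))) := fun k => by
      rw [hμIic]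
      exact ENNReal.ofReal_le_ofReal (hcon _)
    have := ge_of_tendsto' h3 h4
    simp [ENNReal.ofReal_eq_zero] at this
    linarith
  -- the pushforward is uniform on [0,1]
  have hmap : μ.map Ftilde = volume.restrict (Icc 0 1) := by
    haveI : IsProbabilityMeasure (μ.map Ftilde) :=
      Measure.isProbabilityMeasure_map hFcont.measurable.aemeasurable
    refine Measure.ext_of_Iic _ _ fun t => ?_
    rw [Measure.map_apply hFcont.measurable measurableSet_Iic,
      Measure.restrict_apply measurableSet_Iic]
    rcases lt_or_ge t 0 with ht | ht
    · have h1 : Ftilde ⁻¹' Iic t = ∅ := by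
        ext y; simp only [mem_preimage, mem_Iic, mem_empty_iff_false, iff_false, not_le]
        exact lt_of_lt_of_le ht (hF0 y)
      have h2 : Iic t ∩ Icc 0 1 = (∅ : Set ℝ) := by
        ext y; simp only [mem_inter_iff, mem_Iic, mem_Icc, mem_empty_iff_false, iff_false]
        rintro ⟨h, h0, -⟩; linarith
      rw [h1, h2]
      simp
    rcases le_or_gt 1 t with ht1 | ht1
    · have h1 : Ftilde ⁻¹' Iic t = univ := by
        ext y; simp only [mem_preimage, mem_Iic, mem_univ, iff_true]
        exact le_trans (hF1 y) ht1
      have h2 : Iic t ∩ Icc 0 1 = Icc 0 1 := by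
        rw [inter_eq_right]
        exact fun y hy => le_trans hy.2 ht1
      rw [h1, h2, hμuniv, Real.volume_Icc]
      norm_num
    · -- 0 ≤ t < 1
      have h2 : Iic t ∩ Icc 0 1 = Icc 0 t := by
        ext y
        simp only [mem_inter_iff, mem_Iic, mem_Icc]
        constructor
        · rintro ⟨h, h0, -⟩; exact ⟨h0, h⟩
        · rintro ⟨h0, h⟩; exact ⟨h, h0, by linarith⟩
      rw [h2, Real.volume_Icc]
      by_cases hE : (Ftilde ⁻¹' Iic t).Nonempty
      · obtain ⟨y0, hy0⟩ := (hFtop.eventually (eventually_gt_nhds ht1)).exists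
        have hbdd : BddAbove (Ftilde ⁻¹' Iic t) := ⟨y0, fun y hy => by
          by_contra hlt
          push_neg at hlt
          exact absurd (le_trans (hFmono hlt.le) hy) (not_le.2 hy0)⟩
        set ys := sSup (Ftilde ⁻¹' Iic t) with hys
        have hysmem : ys ∈ Ftilde ⁻¹' Iic t :=
          (isClosed_Iic.preimage hFcont).csSup_mem hE hbdd
        have hEeq : Ftilde ⁻¹' Iic t = Iic ys := by
          apply subset_antisymm
          · exact fun y hy => le_csSup hbdd hy
          · exact fun y hy => le_trans (hFmono hy) hysmem
        have hge : t ≤ Ftilde ys := by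
          by_contra hlt
          push_neg at hlt
          have htends : Tendsto Ftilde (𝓝[>] ys) (𝓝 (Ftilde ys)) :=
            (hFcont.tendsto ys).mono_left nhdsWithin_le_nhds
          have hev : ∀ᶠ y in 𝓝[>] ys, Ftilde y < t :=
            htends.eventually (eventually_lt_nhds hlt)
          obtain ⟨y, hyt, hygt⟩ := (hev.and self_mem_nhdsWithin).exists
          have : y ≤ ys := le_csSup hbdd (le_of_lt hyt)
          exact absurd hygt (not_lt.2 this)
        have hfys : Ftilde ys = t := le_antisymm hysmem hge
        rw [hEeq, hμIic, hfys]
        congr 1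
        linarith
      · rw [not_nonempty_iff_eq_empty] at hE
        rcases eq_or_lt_of_le ht with rfl | htpos
        · rw [hE]; simp
        · obtain ⟨y, hy⟩ := hFbot t htpos
          exact absurd (by exact hy.le : Ftilde y ≤ t) (by
            have : y ∉ Ftilde ⁻¹' Iic t := by rw [hE]; exact notMem_empty y
            simpa using this)
  -- the Bernstein weight function
  set g : ℝ → ℝ := fun t => (K.choose n : ℝ) * t ^ n * (1 - t) ^ (K - n) with hg
  have hg_cont : Continuous g := by
    rw [hg]; fun_prop
  have hg01 : ∀ y, 0 ≤ g (Ftilde y) ∧ g (Ftilde y) ≤ 1 := by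
    intro y
    have h0 := hF0 y; have h1 := hF1 y
    have h1' : (0:ℝ) ≤ 1 - Ftilde y := by linarith
    constructor
    · rw [hg]; positivity
    · have hsum := add_pow (Ftilde y) (1 - Ftilde y) K
      rw [show Ftilde y + (1 - Ftilde y) = 1 by ring, one_pow] at hsum
      have hmem : n ∈ Finset.range (K + 1) := Finset.mem_range.2 (by omega)
      have hterm := Finset.single_le_sum
        (f := fun k => Ftilde y ^ k * (1 - Ftilde y) ^ (K - k) * (K.choose k : ℝ))
        (fun k _ => by positivity) hmem
      rw [← hsum] at hterm
      calc g (Ftilde y)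
          = Ftilde y ^ n * (1 - Ftilde y) ^ (K - n) * (K.choose n : ℝ) := by rw [hg]; ring
        _ ≤ 1 := hterm
  have hμint : (∫ y, g (Ftilde y) * ptilde y) = 1 / ((K:ℝ) + 1) := by
    have h1 : ∫ y, g (Ftilde y) ∂μ = ∫ t, g t ∂(μ.map Ftilde) :=
      (integral_map hFcont.measurable.aemeasurable hg_cont.aestronglyMeasurable).symm
    have h2 : ∫ y, g (Ftilde y) ∂μ = ∫ y, g (Ftilde y) * ptilde y := by
      have hnn : AEMeasurable (fun x => Real.toNNReal (ptilde x)) volume :=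
        measurable_real_toNNReal.comp_aemeasurable hpt_int.aemeasurable
    -- μ is withDensity of the ℝ≥0-valued function
      have hgoal := integral_withDensity_eq_integral_smul₀ hnn (fun y => g (Ftilde y))
      rw [hμ]
      rw [show (fun x => ENNReal.ofReal (ptilde x))
          = fun x => ((Real.toNNReal (ptilde x)) : ℝ≥0∞) from rfl]
      rw [hgoal]
      congr 1
      funext y
      rw [NNReal.smul_def, Real.coe_toNNReal _ (hpt_nonneg y), smul_eq_mul]
      ring
    rw [← h2, h1, hmap]
    have h3 : ∫ t, g t ∂(volume.restrict (Icc 0 1)) = ∫ t in (0:ℝ)..1, g t := by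
      rw [intervalIntegral.integral_of_le zero_le_one, ← integral_Icc_eq_integral_Ioc]
    rw [h3, hg]
    exact bernstein_integral hn
  have hgFmeas : AEStronglyMeasurable (fun y => g (Ftilde y)) volume :=
    (hg_cont.comp hFcont).aestronglyMeasurable
  have hbd : ∃ C, ∀ y, ‖g (Ftilde y)‖ ≤ C :=
    ⟨1, fun y => by rw [Real.norm_eq_abs, abs_of_nonneg (hg01 y).1]; exact (hg01 y).2⟩
  have hint_p : Integrable (fun y => g (Ftilde y) * p y) := hp_int.bdd_mul hgFmeas (Filter.Eventually.of_forall hbd.choose_spec)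
  have hint_pt : Integrable (fun y => g (Ftilde y) * ptilde y) := hpt_int.bdd_mul hgFmeas (Filter.Eventually.of_forall hbd.choose_spec)
  have hint_diff : Integrable (fun y => |p y - ptilde y|) := (hp_int.sub hpt_int).abs
  have hbound : |(∫ y, g (Ftilde y) * p y) - ∫ y, g (Ftilde y) * ptilde y| ≤ ε := by
    rw [← integral_sub hint_p hint_pt]
    calc |∫ y, (g (Ftilde y) * p y - g (Ftilde y) * ptilde y)|
        ≤ ∫ y, |g (Ftilde y) * p y - g (Ftilde y) * ptilde y| := by
          simpa [Real.norm_eq_abs] using norm_integral_le_integral_norm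
            (fun y => g (Ftilde y) * p y - g (Ftilde y) * ptilde y)
      _ ≤ ∫ y, |p y - ptilde y| := by
          apply integral_mono (hint_p.sub hint_pt).abs hint_diff
          intro y
          simp only [Pi.sub_apply]
          rw [show g (Ftilde y) * p y - g (Ftilde y) * ptilde y
              = g (Ftilde y) * (p y - ptilde y) by ring, abs_mul, abs_of_nonneg (hg01 y).1]
          exact mul_le_of_le_one_left (abs_nonneg _) (hg01 y).2
      _ ≤ ε := hL1
  rw [hμint] at hbound
  have hQ : (∫ y, (K.choose n : ℝ) * Ftilde y ^ n * (1 - Ftilde y) ^ (K - n) * p y)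
      = ∫ y, g (Ftilde y) * p y := by
    congr 1
  rw [hQ]
  obtain ⟨hb1, hb2⟩ := abs_le.mp hbound
  constructor <;> linarith
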